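/- Let E ∈ L(H) with 0 ≤ E ≤ I and let R be an orthogonal projection on a Hilbert space H. If RER is an orthogonal projection, then E and R commute. -/

import Mathlib

open Matrix
open scoped ComplexOrder

/-- If E is an effect, R a projection, and RER is a projection, then E and R
commute. -/
theorem effect_commutes_of_compression_proj
    (d : ℕ) (E R : Matrix (Fin d) (Fin d) ℂ)
    (hE0 : E.PosSemidef) (hE1 : (1 - E).PosSemidef)
    (hRh : R.IsHermitian) (hR2 : R * R = R)
    (hRER : (R * E * R) * (R * E * R) = R * E * R) :
    E * R = R * E := by
  have hEh := hE0.isHermitian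
  have hRR : ∀ X : Matrix (Fin d) (Fin d) ℂ, R * (R * X) = R * X := by
    intro X; rw [← mul_assoc, hR2]
  set S := E * R - R * E * R with hS
  have hSH : Sᴴ = R * E - R * E * R := by
    simp [hS, conjTranspose_mul, hEh.eq, hRh.eq, mul_assoc]
  have hRER' : R * (E * (R * (E * R))) = R * (E * R) := by
    simpa only [mul_assoc, hRR] using hRER
  have key : Sᴴ * S = R * (E * (E * R)) - R * (E * R) := by
    rw [hSH, hS]
    simp only [sub_mul, mul_sub, mul_assoc, hRR, hRER']
    abel
  -- the negative of Sᴴ * S is PSD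
  set Q := (open MatrixOrder in CFC.sqrt E) with hQdef
  have hQ : Q * Q = E := by
    open MatrixOrder in exact CFC.sqrt_mul_sqrt_self E (nonneg_iff_posSemidef.mpr hE0)
  have hsq : Q * (E * (Q * R)) = E * (E * R) := by
    rw [← hQ]; simp only [mul_assoc]
  have hneg : (R * (E * R) - R * (E * (E * R))).PosSemidef := by
    have h := hE1.conjTranspose_mul_mul_same (Q * R)
    have hBH : (Q * R)ᴴ = R * Q := by
      simp [conjTranspose_mul, hQdef, (open MatrixOrder in nonneg_iff_posSemidef.mp (CFC.sqrt_nonneg E)).isHermitian.eq, hRh.eq]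
    rw [hBH] at h
    have heq : R * Q * (1 - E) * (Q * R)
        = R * (E * R) - R * (E * (E * R)) := by
      simp only [mul_sub, sub_mul, mul_one, mul_assoc, hsq]
      congr 1
      rw [← hQ]; simp only [mul_assoc]
    rwa [heq] at h
  have hpos : (Sᴴ * S).PosSemidef := posSemidef_conjTranspose_mul_self S
  have hS0 : S = 0 := by
    rw [← conjTranspose_mul_self_eq_zero (A := S)]
    have hmv : ∀ x, (Sᴴ * S) *ᵥ x = 0 := by
      intro x
      refine (hpos.dotProduct_mulVec_zero_iff x).mp (le_antisymm ?_ (hpos.dotProduct_mulVec_nonneg x))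
      have h1 := hneg.dotProduct_mulVec_nonneg x
      have h2 : R * (E * R) - R * (E * (E * R)) = -(Sᴴ * S) := by
        rw [key]; abel
      rw [h2] at h1
      simpa [neg_mulVec, dotProduct_neg, neg_nonneg] using h1
    ext i j
    have := congrFun (hmv (Pi.single j 1)) i
    simpa [mulVec, dotProduct, Pi.single_apply] using this
  have hER : E * R = R * E * R := sub_eq_zero.mp hS0
  have hRE : R * E = R * E * R := by
    have h := congrArg conjTranspose hER
    simpa [conjTranspose_mul, hEh.eq, hRh.eq, mul_assoc] using h
  rw [hER]; exact hRE.symm
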